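/- Fix i ∈ {1,…,2m} and j ∈ {1,…,n}, suppose g_↓ ∩ L_ij ≠ ∅ and let r* be the constant value of r_↓ on g_↓ ∩ L_ij. (a) If g_↓ ∩ B_ij = ∅, then r_↓(u,v) = r* for all (u,v) ∈ g_↓ ∩ TR_ij. (b) If g_↓ ∩ B_ij = [a,b]×{j−1} is nonempty, then for every (u,j) ∈ g_↓ ∩ T_ij: r_↓(u,j) = r* if u < a; r_↓(u,j) = r_↓(u,j−1) if a ≤ u < b; r_↓(u,j) = r_↓(b,j−1) if u ≥ b; and r_↓(i,v) = r_↓(b,j−1) for every (i,v) ∈ g_↓ ∩ R_ij. -/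
import Mathlib


open Set

noncomputable section

/-- The piecewise linear closed curve through the vertices `x 0, x 1, …`:
`f(i+α) = (1-α) • x i + α • x (i+1)`. -/
def fCurve {k : ℕ} (x : ℕ → EuclideanSpace ℝ (Fin k)) (t : ℝ) :
    EuclideanSpace ℝ (Fin k) :=
  (1 - Int.fract t) • x (⌊t⌋.toNat) + Int.fract t • x (⌊t⌋.toNat + 1)

/-- The extension of the curve from `[0,m]` to `[0,2m]` by `f(u) = f(u-m)` for `u > m`. -/
def fCurveExt {k : ℕ} (m : ℕ) (x : ℕ → EuclideanSpace ℝ (Fin k)) (u : ℝ) :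
    EuclideanSpace ℝ (Fin k) :=
  if u ≤ m then fCurve x u else fCurve x (u - m)

/-- The rectangle `D = [0,2m] × [0,n]`. -/
def Dfull (m n : ℕ) : Set (ℝ × ℝ) :=
  Icc (0:ℝ) (2*(m:ℝ)) ×ˢ Icc (0:ℝ) (n:ℝ)

/-- The free space `D_ε = {(u,v) ∈ D : dist (f_X u) (f_Y v) ≤ ε}`. -/
def Dfree {k : ℕ} (m n : ℕ) (x y : ℕ → EuclideanSpace ℝ (Fin k)) (ε : ℝ) :
    Set (ℝ × ℝ) :=
  {p ∈ Dfull m n | dist (fCurveExt m x p.1) (fCurve y p.2) ≤ ε}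

/-- The top side `T = [0,2m] × {n}` of `D`. -/
def Tside (m n : ℕ) : Set (ℝ × ℝ) := Icc (0:ℝ) (2*(m:ℝ)) ×ˢ {(n:ℝ)}

/-- The bottom side `B = [0,2m] × {0}` of `D`. -/
def Bside (m : ℕ) : Set (ℝ × ℝ) := Icc (0:ℝ) (2*(m:ℝ)) ×ˢ {(0:ℝ)}

/-- A monotone (non-decreasing) path: a connected subset `γ ⊆ Dε` with
`(u-u')·(v-v') ≥ 0` for all `(u,v), (u',v') ∈ γ`. -/
def IsMonPath (Dε γ : Set (ℝ × ℝ)) : Prop :=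
  γ ⊆ Dε ∧ IsConnected γ ∧
    ∀ p ∈ γ, ∀ q ∈ γ, (p.1 - q.1) * (p.2 - q.2) ≥ 0

/-- Two points are mutually reachable if some monotone path contains both. -/
def Reach (Dε : Set (ℝ × ℝ)) (p q : ℝ × ℝ) : Prop :=
  ∃ γ : Set (ℝ × ℝ), IsMonPath Dε γ ∧ p ∈ γ ∧ q ∈ γ

/-- `g↓`: the points of `Dε` mutually reachable with at least one point of `B`. -/
def gDown (m : ℕ) (Dε : Set (ℝ × ℝ)) : Set (ℝ × ℝ) :=
  {p ∈ Dε | ∃ q ∈ Bside m, Reach Dε p q}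

/-- `g↑`: the points of `Dε` mutually reachable with at least one point of `T`. -/
def gUp (m n : ℕ) (Dε : Set (ℝ × ℝ)) : Set (ℝ × ℝ) :=
  {p ∈ Dε | ∃ q ∈ Tside m n, Reach Dε p q}

/-- The pointer `r↑(p)`: the maximum `u* ∈ [0,2m]` such that `p` and `(u*, n)`
are mutually reachable. -/
def rUp (m n : ℕ) (Dε : Set (ℝ × ℝ)) (p : ℝ × ℝ) : ℝ :=
  sSup {u : ℝ | u ∈ Icc (0:ℝ) (2*(m:ℝ)) ∧ Reach Dε p (u, (n:ℝ))}

/-- The pointer `r↓(p)`: for `p` with `p.2 > 0`, the maximum `u* ∈ [0,2m]` such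
that `p` and `(u*, 0)` are mutually reachable; on the bottom side `r↓(u,0) = u`. -/
def rDown (m : ℕ) (Dε : Set (ℝ × ℝ)) (p : ℝ × ℝ) : ℝ :=
  if p.2 = 0 then p.1
  else sSup {u : ℝ | u ∈ Icc (0:ℝ) (2*(m:ℝ)) ∧ Reach Dε p (u, (0:ℝ))}

/-- The cell `D_ij = [i-1,i] × [j-1,j]`. -/
def cellD (i j : ℕ) : Set (ℝ × ℝ) :=
  Icc ((i:ℝ)-1) (i:ℝ) ×ˢ Icc ((j:ℝ)-1) (j:ℝ)

/-- The top side `T_ij` of the cell `D_ij`. -/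
def cellT (i j : ℕ) : Set (ℝ × ℝ) := Icc ((i:ℝ)-1) (i:ℝ) ×ˢ {(j:ℝ)}

/-- The bottom side `B_ij` of the cell `D_ij`. -/
def cellB (i j : ℕ) : Set (ℝ × ℝ) := Icc ((i:ℝ)-1) (i:ℝ) ×ˢ {((j:ℝ)-1)}

/-- The right side `R_ij` of the cell `D_ij`. -/
def cellR (i j : ℕ) : Set (ℝ × ℝ) := {(i:ℝ)} ×ˢ Icc ((j:ℝ)-1) (j:ℝ)

/-- The left side `L_ij` of the cell `D_ij`. -/
def cellL (i j : ℕ) : Set (ℝ × ℝ) := {((i:ℝ)-1)} ×ˢ Icc ((j:ℝ)-1) (j:ℝ)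

/-- The partial order `≼` on `D`: `(u1,v1) ≼ (u2,v2)` iff `u1 ≤ u2` and `v1 ≥ v2`. -/
def prec (p q : ℝ × ℝ) : Prop := p.1 ≤ q.1 ∧ q.2 ≤ p.2

section paths
variable {Dε γ : Set (ℝ × ℝ)}

lemma mon_cover (h : IsMonPath Dε γ) {q : ℝ × ℝ} (hq : q ∈ γ) :
    ∀ a ∈ γ, a ≤ q ∨ q ≤ a := by
  intro a ha
  have hm := h.2.2 a ha q hq
  rcases lt_trichotomy a.1 q.1 with h1 | h1 | h1
  · exact Or.inl ⟨le_of_lt h1, by nlinarith⟩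
  · rcases le_total a.2 q.2 with h2 | h2
    · exact Or.inl ⟨le_of_eq h1, h2⟩
    · exact Or.inr ⟨le_of_eq h1.symm, h2⟩
  · exact Or.inr ⟨le_of_lt h1, by nlinarith⟩

/-- helper for preconnectedness of the trim -/
private lemma trim_preconn_aux {C C' : Set (ℝ × ℝ)} (hC : IsClosed C) (hC' : IsClosed C')
    (hcov : γ ⊆ C ∪ C') (hconn : IsPreconnected γ) {q : ℝ × ℝ} (hq : q ∈ γ) (hqC : q ∈ C)
    (hpinch : ∀ z, z ∈ C → z ∈ C' → z = q)
    {F F' : Set (ℝ × ℝ)} (hF : IsClosed F) (hF' : IsClosed F')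
    (hcov2 : γ ∩ C ⊆ F ∪ F') (hqF : q ∈ F) (hx' : ((γ ∩ C) ∩ F').Nonempty) :
    ((γ ∩ C) ∩ (F ∩ F')).Nonempty := by
  have hmain := (isPreconnected_closed_iff.1 hconn) (C' ∪ (C ∩ F)) (C ∩ F')
    (hC'.union (hC.inter hF)) (hC.inter hF')
    (by intro a ha; rcases hcov ha with h | h
        · rcases hcov2 ⟨ha, h⟩ with h2 | h2
          · exact Or.inl (Or.inr ⟨h, h2⟩)
          · exact Or.inr ⟨h, h2⟩
        · exact Or.inl (Or.inl h))
    ⟨q, hq, Or.inr ⟨hqC, hqF⟩⟩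
    (by rcases hx' with ⟨z, ⟨hz, hzC⟩, hzF'⟩; exact ⟨z, hz, hzC, hzF'⟩)
  rcases hmain with ⟨z, hz, hz1, hz2⟩
  rcases hz1 with h | h
  · have hzq : z = q := hpinch z hz2.1 h
    exact ⟨q, ⟨⟨hq, hqC⟩, hqF, hzq ▸ hz2.2⟩⟩
  · exact ⟨z, ⟨⟨hz, hz2.1⟩, h.2, hz2.2⟩⟩

lemma isClosed_le_point (q : ℝ × ℝ) : IsClosed {a : ℝ × ℝ | a ≤ q} := by
  have : {a : ℝ × ℝ | a ≤ q} = {a : ℝ × ℝ | a.1 ≤ q.1} ∩ {a : ℝ × ℝ | a.2 ≤ q.2} := by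
    ext a; exact Prod.le_def
  rw [this]
  exact (isClosed_le continuous_fst continuous_const).inter
    (isClosed_le continuous_snd continuous_const)

lemma isClosed_ge_point (q : ℝ × ℝ) : IsClosed {a : ℝ × ℝ | q ≤ a} := by
  have : {a : ℝ × ℝ | q ≤ a} = {a : ℝ × ℝ | q.1 ≤ a.1} ∩ {a : ℝ × ℝ | q.2 ≤ a.2} := by
    ext a; exact Prod.le_def
  rw [this]
  exact (isClosed_le continuous_const continuous_fst).inter
    (isClosed_le continuous_const continuous_snd)

private lemma trim_preconn {C C' : Set (ℝ × ℝ)} (hC : IsClosed C) (hC' : IsClosed C')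
    (hcov : γ ⊆ C ∪ C') (hconn : IsPreconnected γ) {q : ℝ × ℝ} (hq : q ∈ γ) (hqC : q ∈ C)
    (hpinch : ∀ z, z ∈ C → z ∈ C' → z = q) : IsPreconnected (γ ∩ C) := by
  rw [isPreconnected_closed_iff]
  intro F F' hF hF' hcov2 hne1 hne2
  rcases hcov2 ⟨hq, hqC⟩ with hqF | hqF
  · exact trim_preconn_aux hC hC' hcov hconn hq hqC hpinch hF hF' hcov2 hqF hne2
  · have := trim_preconn_aux hC hC' hcov hconn hq hqC hpinch hF' hF
      (by intro a ha; exact (hcov2 ha).symm) hqF hne1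
    rcases this with ⟨z, hz1, hz2⟩
    exact ⟨z, hz1, hz2.2, hz2.1⟩

lemma trim_le (h : IsMonPath Dε γ) {q : ℝ × ℝ} (hq : q ∈ γ) :
    IsMonPath Dε {a ∈ γ | a ≤ q} := by
  refine ⟨fun a ha => h.1 ha.1, ⟨⟨q, hq, le_refl q⟩, ?_⟩, fun a ha b hb => h.2.2 a ha.1 b hb.1⟩
  exact trim_preconn (isClosed_le_point q) (isClosed_ge_point q)
    (fun a ha => mon_cover h hq a ha) h.2.1.isPreconnected hq (le_refl q)
    (fun z h1 h2 => le_antisymm h1 h2)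

lemma trim_ge (h : IsMonPath Dε γ) {q : ℝ × ℝ} (hq : q ∈ γ) :
    IsMonPath Dε {a ∈ γ | q ≤ a} := by
  refine ⟨fun a ha => h.1 ha.1, ⟨⟨q, hq, le_refl q⟩, ?_⟩, fun a ha b hb => h.2.2 a ha.1 b hb.1⟩
  exact trim_preconn (isClosed_ge_point q) (isClosed_le_point q)
    (fun a ha => (mon_cover h hq a ha).symm) h.2.1.isPreconnected hq (le_refl q)
    (fun z h1 h2 => le_antisymm h2 h1)

end paths


section paths2
variable {Dε γ δ : Set (ℝ × ℝ)} {p q r : ℝ × ℝ}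

lemma reach_refl (hp : p ∈ Dε) : Reach Dε p p :=
  ⟨{p}, ⟨singleton_subset_iff.2 hp, isConnected_singleton,
    by rintro a rfl b rfl; simp⟩, rfl, rfl⟩

lemma reach_symm (h : Reach Dε p q) : Reach Dε q p := by
  rcases h with ⟨γ, hγ, hp, hq⟩; exact ⟨γ, hγ, hq, hp⟩

lemma reach_memL (h : Reach Dε p q) : p ∈ Dε := by
  rcases h with ⟨γ, hγ, hp, _⟩; exact hγ.1 hp

lemma reach_memR (h : Reach Dε p q) : q ∈ Dε := by
  rcases h with ⟨γ, hγ, _, hq⟩; exact hγ.1 hq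

lemma reach_mul (h : Reach Dε p q) : (p.1 - q.1) * (p.2 - q.2) ≥ 0 := by
  rcases h with ⟨γ, hγ, hp, hq⟩; exact hγ.2.2 p hp q hq

lemma reach_fst_le (h : Reach Dε p q) (h2 : q.2 < p.2) : q.1 ≤ p.1 := by
  have := reach_mul h; nlinarith

/-- A monotone path with both endpoints trimmed:  all its points lie between `q` and `p`. -/
lemma reach_trimmed (h : Reach Dε p q) (hqp : q ≤ p) :
    ∃ γ, IsMonPath Dε γ ∧ p ∈ γ ∧ q ∈ γ ∧ ∀ a ∈ γ, q ≤ a ∧ a ≤ p := by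
  rcases h with ⟨γ, hγ, hp, hq⟩
  refine ⟨{a ∈ {b ∈ γ | b ≤ p} | q ≤ a}, trim_ge (trim_le hγ hp) ⟨hq, hqp⟩, ⟨⟨hp, le_refl _⟩, hqp⟩,
    ⟨⟨hq, hqp⟩, le_refl _⟩, fun a ha => ⟨ha.2, ha.1.2⟩⟩

lemma reach_trans (hpq : Reach Dε p q) (hqr : Reach Dε q r) (hrq : r ≤ q) (hqp : q ≤ p) :
    Reach Dε p r := by
  rcases reach_trimmed hpq hqp with ⟨γ1, hγ1, hp1, hq1, hb1⟩
  rcases reach_trimmed hqr hrq with ⟨γ2, hγ2, hq2, hr2, hb2⟩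
  refine ⟨γ1 ∪ γ2, ⟨union_subset hγ1.1 hγ2.1, ?_, ?_⟩, Or.inl hp1, Or.inr hr2⟩
  · exact IsConnected.union ⟨q, hq1, hq2⟩ hγ1.2.1 hγ2.2.1
  · rintro a (ha | ha) b (hb | hb)
    · exact hγ1.2.2 a ha b hb
    · have : b ≤ a := le_trans (hb2 b hb).2 (hb1 a ha).1
      nlinarith [this.1, this.2]
    · have : a ≤ b := le_trans (hb2 a ha).2 (hb1 b hb).1
      nlinarith [this.1, this.2]
    · exact hγ2.2.2 a ha b hb

/-- Find a point on a monotone path with prescribed first coordinate. -/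
lemma reach_between_fst (h : Reach Dε p q) (hqp : q ≤ p) {c : ℝ}
    (hc : c ∈ Icc q.1 p.1) :
    ∃ z, Reach Dε p z ∧ Reach Dε z q ∧ q ≤ z ∧ z ≤ p ∧ z.1 = c := by
  rcases reach_trimmed h hqp with ⟨γ, hγ, hp, hq, hb⟩
  have himg : IsPreconnected (Prod.fst '' γ) :=
    hγ.2.1.isPreconnected.image _ continuous_fst.continuousOn
  have hcmem : c ∈ Prod.fst '' γ := by
    apply himg.Icc_subset ⟨q, hq, rfl⟩ ⟨p, hp, rfl⟩ hc
  rcases hcmem with ⟨z, hz, hzc⟩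
  exact ⟨z, ⟨γ, hγ, hp, hz⟩, ⟨γ, hγ, hz, hq⟩, (hb z hz).1, (hb z hz).2, hzc⟩

/-- Find a point on a monotone path with prescribed second coordinate. -/
lemma reach_between_snd (h : Reach Dε p q) (hqp : q ≤ p) {c : ℝ}
    (hc : c ∈ Icc q.2 p.2) :
    ∃ z, Reach Dε p z ∧ Reach Dε z q ∧ q ≤ z ∧ z ≤ p ∧ z.2 = c := by
  rcases reach_trimmed h hqp with ⟨γ, hγ, hp, hq, hb⟩
  have himg : IsPreconnected (Prod.snd '' γ) :=
    hγ.2.1.isPreconnected.image _ continuous_snd.continuousOn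
  have hcmem : c ∈ Prod.snd '' γ := by
    apply himg.Icc_subset ⟨q, hq, rfl⟩ ⟨p, hp, rfl⟩ hc
  rcases hcmem with ⟨z, hz, hzc⟩
  exact ⟨z, ⟨γ, hγ, hp, hz⟩, ⟨γ, hγ, hz, hq⟩, (hb z hz).1, (hb z hz).2, hzc⟩

/-- The crossing lemma: two compact monotone paths, the first starting (at the top)
left of the second and ending (at the bottom) right of it, must intersect. -/
lemma cross_lemma (hγ : IsMonPath Dε γ) (hδ : IsMonPath Dε δ)
    (hγc : IsCompact γ) (hδc : IsCompact δ)
    {P1 Q1 P2 Q2 : ℝ × ℝ} (hP1 : P1 ∈ γ) (hQ1 : Q1 ∈ γ) (hP2 : P2 ∈ δ) (hQ2 : Q2 ∈ δ)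
    (hγb : ∀ z ∈ γ, Q1 ≤ z ∧ z ≤ P1) (hδb : ∀ z ∈ δ, Q2 ≤ z ∧ z ≤ P2)
    (htop : P1.2 = P2.2) (hbot : Q1.2 = Q2.2) (h1 : P1.1 ≤ P2.1) (h2 : Q2.1 ≤ Q1.1) :
    (γ ∩ δ).Nonempty := by
  set φ : ℝ × ℝ → ℝ := fun z => z.1 + z.2 with hφ
  have hφc : Continuous φ := continuous_fst.add continuous_snd
  -- injectivity on δ
  have hinj : ∀ z ∈ δ, ∀ z' ∈ δ, φ z = φ z' → z = z' := by
    intro z hz z' hz' he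
    have hm := hδ.2.2 z hz z' hz'
    have h1 : z.1 - z'.1 = -(z.2 - z'.2) := by simp only [hφ] at he; linarith
    have : z.2 = z'.2 := by nlinarith
    have : z.1 = z'.1 := by simp only [hφ] at he; linarith
    exact Prod.ext this ‹z.2 = z'.2›
  -- every φ-value of γ is attained on δ
  have hmatch : ∀ z ∈ γ, ∃ z' ∈ δ, φ z' = φ z := by
    intro z hz
    have himg : IsPreconnected (φ '' δ) :=
      hδ.2.1.isPreconnected.image _ hφc.continuousOn
    have : φ z ∈ Icc (φ Q2) (φ P2) := by
      have hb := hγb z hz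
      constructor
      · have := hb.1; simp only [hφ]
        have := this.1; have := (hγb z hz).1.2
        have : Q2.1 + Q2.2 ≤ Q1.1 + Q1.2 := by rw [← hbot]; linarith
        linarith [(hγb z hz).1.1, (hγb z hz).1.2]
      · have : P1.1 + P1.2 ≤ P2.1 + P2.2 := by rw [htop]; linarith
        simp only [hφ]
        linarith [(hγb z hz).2.1, (hγb z hz).2.2]
    rcases himg.Icc_subset ⟨Q2, hQ2, rfl⟩ ⟨P2, hP2, rfl⟩ this with ⟨z', hz', he⟩
    exact ⟨z', hz', he⟩
  -- the two closed pieces of γ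
  set K1 : Set ((ℝ × ℝ) × (ℝ × ℝ)) := {w ∈ γ ×ˢ δ | φ w.2 = φ w.1 ∧ w.2.1 ≤ w.1.1} with hK1
  set K2 : Set ((ℝ × ℝ) × (ℝ × ℝ)) := {w ∈ γ ×ˢ δ | φ w.2 = φ w.1 ∧ w.1.1 ≤ w.2.1} with hK2
  have hKc : ∀ K ∈ ({K1, K2} : Set _), IsCompact K := by
    rintro K (rfl | rfl)
    · apply (hγc.prod hδc).inter_right
      exact (isClosed_eq (hφc.comp continuous_snd) (hφc.comp continuous_fst)).inter
        (isClosed_le (continuous_fst.comp continuous_snd) (continuous_fst.comp continuous_fst))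
    · apply (hγc.prod hδc).inter_right
      exact (isClosed_eq (hφc.comp continuous_snd) (hφc.comp continuous_fst)).inter
        (isClosed_le (continuous_fst.comp continuous_fst) (continuous_fst.comp continuous_snd))
  set A : Set (ℝ × ℝ) := Prod.fst '' K1 with hA
  set B : Set (ℝ × ℝ) := Prod.fst '' K2 with hB
  have hAc : IsClosed A := ((hKc K1 (by simp)).image continuous_fst).isClosed
  have hBc : IsClosed B := ((hKc K2 (by simp [hK2])).image continuous_fst).isClosed
  have hcov : γ ⊆ A ∪ B := by
    intro z hz
    rcases hmatch z hz with ⟨z', hz', he⟩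
    rcases le_total z'.1 z.1 with hle | hle
    · exact Or.inl ⟨(z, z'), ⟨⟨hz, hz'⟩, he, hle⟩, rfl⟩
    · exact Or.inr ⟨(z, z'), ⟨⟨hz, hz'⟩, he, hle⟩, rfl⟩
  -- if a point is in both A and B, it lies on δ
  have hAB : ∀ z ∈ γ, z ∈ A → z ∈ B → (γ ∩ δ).Nonempty := by
    intro z hz hzA hzB
    rcases hzA with ⟨w1, hw1, hw1e⟩
    rcases hzB with ⟨w2, hw2, hw2e⟩
    have he12 : φ w1.2 = φ w2.2 := by
      rw [hw1.2.1, hw2.2.1, hw1e, hw2e]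
    have : w1.2 = w2.2 := hinj _ hw1.1.2 _ hw2.1.2 he12
    have h1' : w1.2.1 ≤ z.1 := hw1e ▸ hw1.2.2
    have h2' : z.1 ≤ w1.2.1 := by rw [this]; exact hw2e ▸ hw2.2.2
    have hfst : w1.2.1 = z.1 := le_antisymm h1' h2'
    have hsnd : w1.2.2 = z.2 := by
      have := hw1.2.1; rw [hw1e] at this
      simp only [hφ] at this; linarith
    have : w1.2 = z := Prod.ext hfst hsnd
    exact ⟨z, hz, this ▸ hw1.1.2⟩
  by_contra hcon
  push_neg at hcon  -- hcon : γ ∩ δ = ∅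
  -- Q1 ∈ A, P1 ∈ B
  have hQ1A : Q1 ∈ A := by
    rcases hmatch Q1 hQ1 with ⟨z', hz', he⟩
    refine ⟨(Q1, z'), ⟨⟨hQ1, hz'⟩, he, ?_⟩, rfl⟩
    have hb := (hδb z' hz').1.2
    have : z'.1 + z'.2 = Q1.1 + Q1.2 := he
    rw [hbot] at *
    linarith
  have hP1B : P1 ∈ B := by
    rcases hmatch P1 hP1 with ⟨z', hz', he⟩
    refine ⟨(P1, z'), ⟨⟨hP1, hz'⟩, he, ?_⟩, rfl⟩
    have hb := (hδb z' hz').2.2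
    have : z'.1 + z'.2 = P1.1 + P1.2 := he
    rw [htop] at *
    linarith
  have hnodouble : ∀ z ∈ γ, ¬(z ∈ A ∧ z ∈ B) := by
    intro z hz ⟨h1, h2⟩
    rcases hAB z hz h1 h2 with ⟨w, hw⟩
    rw [hcon] at hw; exact hw
  have hpre := hγ.2.1.isPreconnected
  rw [isPreconnected_closed_iff] at hpre
  have := hpre A B hAc hBc hcov ⟨Q1, hQ1, hQ1A⟩ ⟨P1, hP1, hP1B⟩
  rcases this with ⟨z, hz, hzA, hzB⟩
  exact hnodouble z hz ⟨hzA, hzB⟩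

end paths2


section affine
variable {k : ℕ} (x : ℕ → EuclideanSpace ℝ (Fin k))

lemma fCurve_nat (l : ℕ) : fCurve x l = x l := by
  rw [fCurve]
  have h1 : ⌊(l:ℝ)⌋ = (l:ℤ) := Int.floor_natCast l
  have h2 : Int.fract (l:ℝ) = 0 := by
    rw [Int.fract, h1]; norm_num
  rw [h1, h2]
  simp

lemma fCurve_eq_affine (l : ℕ) {t : ℝ} (ht : t ∈ Icc (l:ℝ) ((l:ℝ)+1)) :
    fCurve x t = (((l:ℝ)+1) - t) • x l + (t - (l:ℝ)) • x (l+1) := by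
  rcases eq_or_lt_of_le ht.2 with heq | hlt
  · rw [heq]
    have : ((l:ℝ)+1) = ((l+1 : ℕ) : ℝ) := by push_cast; ring
    rw [this, fCurve_nat]
    simp
  · have hfl : ⌊t⌋ = (l : ℤ) := by
      rw [Int.floor_eq_iff]
      constructor
      · exact_mod_cast ht.1
      · exact_mod_cast hlt
    have hfr : Int.fract t = t - (l:ℝ) := by
      rw [Int.fract, hfl]; norm_num
    rw [fCurve, hfl, hfr]
    have : ((l:ℤ)).toNat = l := rfl
    rw [this]
    congr 1
    congr 1
    ring

end affine

section glue
variable {f : ℝ → EuclideanSpace ℝ (Fin 1)} {s t : Set ℝ}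

lemma continuousOn_union_closed' {X Y : Type*} [TopologicalSpace X] [TopologicalSpace Y]
    {f : X → Y} {s t : Set X} (hs : IsClosed s) (ht : IsClosed t)
    (h1 : ContinuousOn f s) (h2 : ContinuousOn f t) : ContinuousOn f (s ∪ t) := by
  intro z hz
  have haux : ∀ (w : Set X), IsClosed w → ContinuousOn f w → ContinuousWithinAt f w z := by
    intro w hw hcw
    by_cases hzw : z ∈ w
    · exact hcw z hzw
    · exact continuousWithinAt_of_notMem_closure (by rwa [hw.closure_eq])
  exact (haux s hs h1).union (haux t ht h2)
end glue

section cont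
variable {k : ℕ} (x : ℕ → EuclideanSpace ℝ (Fin k))

lemma fCurve_contOn (N : ℕ) : ContinuousOn (fCurve x) (Icc (0:ℝ) (N:ℝ)) := by
  induction N with
  | zero =>
      simp only [Nat.cast_zero, Icc_self]
      intro z hz
      simp only [mem_singleton_iff] at hz
      subst hz
      exact continuousWithinAt_singleton
  | succ N ih =>
      have hsplit : Icc (0:ℝ) ((N+1:ℕ):ℝ) = Icc (0:ℝ) (N:ℝ) ∪ Icc (N:ℝ) ((N+1:ℕ):ℝ) := by
        rw [Icc_union_Icc_eq_Icc (by positivity) (by push_cast; linarith)]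
      rw [hsplit]
      apply continuousOn_union_closed' isClosed_Icc isClosed_Icc ih
      have haff : ContinuousOn (fun t : ℝ => (((N:ℝ)+1) - t) • x N + (t - (N:ℝ)) • x (N+1))
          (Icc (N:ℝ) ((N+1:ℕ):ℝ)) := by
        apply Continuous.continuousOn
        exact ((continuous_const.sub continuous_id).smul continuous_const).add
          ((continuous_id.sub continuous_const).smul continuous_const)
      apply haff.congr
      intro t ht
      exact fCurve_eq_affine x N (by push_cast at ht ⊢; exact ht)

lemma fCurveExt_contOn (m : ℕ) (hx : x m = x 0) :
    ContinuousOn (fCurveExt m x) (Icc (0:ℝ) (2*(m:ℝ))) := by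
  have hsplit : Icc (0:ℝ) (2*(m:ℝ)) = Icc (0:ℝ) (m:ℝ) ∪ Icc (m:ℝ) (2*(m:ℝ)) := by
    rw [Icc_union_Icc_eq_Icc (by positivity) (by linarith [Nat.cast_nonneg (α := ℝ) m])]
  rw [hsplit]
  apply continuousOn_union_closed' isClosed_Icc isClosed_Icc
  · apply (fCurve_contOn x m).congr
    intro t ht
    rw [fCurveExt, if_pos ht.2]
  · have h2 : ContinuousOn (fun u : ℝ => fCurve x (u - (m:ℝ))) (Icc (m:ℝ) (2*(m:ℝ))) := by
      apply (fCurve_contOn x m).comp ((continuous_id.sub continuous_const).continuousOn)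
      intro u hu
      refine ⟨?_, ?_⟩
      · show (0:ℝ) ≤ u - (m:ℝ); linarith [hu.1]
      · show u - (m:ℝ) ≤ (m:ℝ); linarith [hu.2]
    apply h2.congr
    intro u hu
    rw [fCurveExt]
    by_cases hum : u ≤ (m:ℝ)
    · rw [if_pos hum]
      have hm' : u = ((m:ℕ):ℝ) := le_antisymm hum hu.1
      subst hm'
      show fCurve x ((m:ℕ):ℝ) = fCurve x (((m:ℕ):ℝ) - ((m:ℕ):ℝ))
      rw [sub_self, show (0:ℝ) = ((0:ℕ):ℝ) by norm_num, fCurve_nat, fCurve_nat, hx]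
    · rw [if_neg hum]

lemma isClosed_Dfree (m n : ℕ) (y : ℕ → EuclideanSpace ℝ (Fin k)) (ε : ℝ) (hx : x m = x 0) :
    IsClosed (Dfree m n x y ε) := by
  have hdist : ContinuousOn (fun p : ℝ × ℝ => dist (fCurveExt m x p.1) (fCurve y p.2))
      (Dfull m n) := by
    have : (fun p : ℝ × ℝ => dist (fCurveExt m x p.1) (fCurve y p.2)) =
        (fun q : EuclideanSpace ℝ (Fin k) × EuclideanSpace ℝ (Fin k) => dist q.1 q.2) ∘
          (fun p : ℝ × ℝ => (fCurveExt m x p.1, fCurve y p.2)) := rfl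
    rw [this]
    apply continuous_dist.comp_continuousOn
    apply ContinuousOn.prodMk
    · exact (fCurveExt_contOn x m hx).comp continuous_fst.continuousOn
        (fun p hp => hp.1)
    · exact (fCurve_contOn y n).comp continuous_snd.continuousOn (fun p hp => hp.2)
  have : Dfree m n x y ε = Dfull m n ∩
      (fun p : ℝ × ℝ => dist (fCurveExt m x p.1) (fCurve y p.2)) ⁻¹' (Iic ε) := rfl
  rw [this]
  exact hdist.preimage_isClosed_of_isClosed (isClosed_Icc.prod isClosed_Icc) isClosed_Iic
end cont

section convexity
variable {k : ℕ} (x y : ℕ → EuclideanSpace ℝ (Fin k))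

lemma fCurve_affine_cell (j : ℕ) (hj : 1 ≤ j) :
    ∃ P Q : EuclideanSpace ℝ (Fin k), ∀ v ∈ Icc ((j:ℝ)-1) (j:ℝ),
      fCurve y v = P + v • Q := by
  obtain ⟨l, rfl⟩ : ∃ l, j = l + 1 := ⟨j - 1, (Nat.succ_pred_eq_of_pos hj).symm⟩
  refine ⟨((l:ℝ)+1) • y l - (l:ℝ) • y (l+1), y (l+1) - y l, ?_⟩
  intro v hv
  have hv' : v ∈ Icc ((l:ℝ)) ((l:ℝ)+1) := by
    constructor
    · have := hv.1; push_cast at this ⊢; linarith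
    · have := hv.2; push_cast at this ⊢; linarith
  rw [fCurve_eq_affine y l hv']
  module

lemma fCurveExt_affine_cell (m : ℕ) (hx : x m = x 0) (i : ℕ) (hi1 : 1 ≤ i) (hi2 : i ≤ 2*m) :
    ∃ P Q : EuclideanSpace ℝ (Fin k), ∀ u ∈ Icc ((i:ℝ)-1) (i:ℝ),
      fCurveExt m x u = P + u • Q := by
  by_cases him : i ≤ m
  · rcases fCurve_affine_cell x i hi1 with ⟨P, Q, hPQ⟩
    refine ⟨P, Q, fun u hu => ?_⟩
    rw [fCurveExt, if_pos (le_trans hu.2 (by exact_mod_cast him)), hPQ u hu]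
  · -- i > m
    push_neg at him
    obtain ⟨l, hl⟩ : ∃ l, i = m + l + 1 := ⟨i - m - 1, by omega⟩
    have hcast : (i:ℝ) = (m:ℝ) + (l:ℝ) + 1 := by rw [hl]; push_cast; ring
    refine ⟨(((l:ℝ)+1) + (m:ℝ)) • x l - ((l:ℝ) + (m:ℝ)) • x (l+1), x (l+1) - x l, ?_⟩
    intro u hu
    by_cases hum : u ≤ (m:ℝ)
    · -- forces u = m and l = 0
      have hu1 := hu.1
      have hum' : (m:ℝ) ≤ u := by rw [hcast] at hu1; push_cast at hu1; linarith
      have huel : u = (m:ℝ) := le_antisymm hum hum'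
      have hl0 : l = 0 := by
        by_contra hl0
        have : (1:ℝ) ≤ (l:ℝ) := by exact_mod_cast Nat.one_le_iff_ne_zero.2 hl0
        rw [hcast] at hu1; linarith
      subst hl0
      rw [fCurveExt, if_pos hum, huel]
      rw [show (m:ℝ) = ((m:ℕ):ℝ) from rfl, fCurve_nat, hx]
      simp only [Nat.cast_zero, zero_add]
      module
    · rw [fCurveExt, if_neg hum]
      have : u - (m:ℝ) ∈ Icc ((l:ℝ)) ((l:ℝ)+1) := by
        constructor
        · have := hu.1; rw [hcast] at this; linarith
        · have := hu.2; rw [hcast] at this; linarith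
      rw [fCurve_eq_affine x l this]
      module

lemma cell_subset_Dfull (m n i j : ℕ) (hi2 : i ≤ 2*m) (hj2 : j ≤ n) (hi1 : 1 ≤ i) (hj1 : 1 ≤ j) :
    cellD i j ⊆ Dfull m n := by
  rintro ⟨u, v⟩ ⟨hu, hv⟩
  constructor
  · constructor
    · have : (1:ℝ) ≤ (i:ℝ) := by exact_mod_cast hi1
      have := hu.1; simp only at *; linarith
    · have : (i:ℝ) ≤ 2*(m:ℝ) := by exact_mod_cast hi2
      have := hu.2; simp only at *; linarith
  · constructor
    · have : (1:ℝ) ≤ (j:ℝ) := by exact_mod_cast hj1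
      have := hv.1; simp only at *; linarith
    · have : (j:ℝ) ≤ (n:ℝ) := by exact_mod_cast hj2
      have := hv.2; simp only at *; linarith

lemma convex_free_cell (m n : ℕ) (ε : ℝ) (hx : x m = x 0)
    (i j : ℕ) (hi1 : 1 ≤ i) (hi2 : i ≤ 2*m) (hj1 : 1 ≤ j) (hj2 : j ≤ n) :
    Convex ℝ (Dfree m n x y ε ∩ cellD i j) := by
  rcases fCurveExt_affine_cell x m hx i hi1 hi2 with ⟨P, Q, hPQ⟩
  rcases fCurve_affine_cell y j hj1 with ⟨P', Q', hPQ'⟩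
  intro p hp q hq a b ha hb hab
  have hcell : Convex ℝ (cellD i j) := (convex_Icc _ _).prod (convex_Icc _ _)
  have hr : a • p + b • q ∈ cellD i j := hcell hp.2 hq.2 ha hb hab
  refine ⟨⟨cell_subset_Dfull m n i j hi2 hj2 hi1 hj1 hr, ?_⟩, hr⟩
  have h1 : (a • p + b • q).1 = a * p.1 + b * q.1 := rfl
  have h2 : (a • p + b • q).2 = a * p.2 + b * q.2 := rfl
  rw [h1, h2]
  have hF : fCurveExt m x (a * p.1 + b * q.1)
      = a • (fCurveExt m x p.1) + b • (fCurveExt m x q.1) := by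
    rw [hPQ _ (by rw [← h1]; exact hr.1), hPQ _ hp.2.1, hPQ _ hq.2.1]
    have hb' : b = 1 - a := by linarith
    subst hb'
    module
  have hG : fCurve y (a * p.2 + b * q.2)
      = a • (fCurve y p.2) + b • (fCurve y q.2) := by
    rw [hPQ' _ (by rw [← h2]; exact hr.2), hPQ' _ hp.2.2, hPQ' _ hq.2.2]
    have hb' : b = 1 - a := by linarith
    subst hb'
    module
  rw [hF, hG]
  calc dist (a • fCurveExt m x p.1 + b • fCurveExt m x q.1)
        (a • fCurve y p.2 + b • fCurve y q.2)
      ≤ dist (a • fCurveExt m x p.1) (a • fCurve y p.2)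
        + dist (b • fCurveExt m x q.1) (b • fCurve y q.2) := dist_add_add_le _ _ _ _
    _ = ‖a‖ * dist (fCurveExt m x p.1) (fCurve y p.2)
        + ‖b‖ * dist (fCurveExt m x q.1) (fCurve y q.2) := by rw [dist_smul₀, dist_smul₀]
    _ ≤ a * ε + b * ε := by
        rw [Real.norm_eq_abs, Real.norm_eq_abs, abs_of_nonneg ha, abs_of_nonneg hb]
        have e1 := hp.1.2
        have e2 := hq.1.2
        have d1 : (0:ℝ) ≤ dist (fCurveExt m x p.1) (fCurve y p.2) := dist_nonneg
        have d2 : (0:ℝ) ≤ dist (fCurveExt m x q.1) (fCurve y q.2) := dist_nonneg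
        nlinarith
    _ = ε := by rw [← add_mul, hab, one_mul]
end convexity

section rdown
variable {k m n : ℕ} {Dε γ : Set (ℝ × ℝ)} {p q : ℝ × ℝ}

/-- The set whose supremum defines `rDown`. -/
def Sset (m : ℕ) (Dε : Set (ℝ × ℝ)) (p : ℝ × ℝ) : Set ℝ :=
  {u : ℝ | u ∈ Icc (0:ℝ) (2*(m:ℝ)) ∧ Reach Dε p (u, (0:ℝ))}

lemma rDown_of_ne (h : p.2 ≠ 0) : rDown m Dε p = sSup (Sset m Dε p) := if_neg h

lemma rDown_of_eq (h : p.2 = 0) : rDown m Dε p = p.1 := if_pos h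

lemma Sset_bdd : BddAbove (Sset m Dε p) := ⟨2*(m:ℝ), fun u hu => hu.1.2⟩

lemma Sset_nonempty (hp : p ∈ gDown m Dε) : (Sset m Dε p).Nonempty := by
  rcases hp.2 with ⟨q, hq, hr⟩
  rcases hq with ⟨hq1, hq2⟩
  have : q = (q.1, (0:ℝ)) := Prod.ext rfl hq2
  exact ⟨q.1, hq1, this ▸ hr⟩

lemma mem_gDown_of_reach {u : ℝ} (hr : Reach Dε p (u, (0:ℝ)))
    (hu : u ∈ Icc (0:ℝ) (2*(m:ℝ))) : p ∈ gDown m Dε :=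
  ⟨reach_memL hr, (u, (0:ℝ)), ⟨hu, rfl⟩, hr⟩

lemma le_rDown (h2 : p.2 ≠ 0) {u : ℝ} (hu : u ∈ Sset m Dε p) : u ≤ rDown m Dε p := by
  rw [rDown_of_ne h2]; exact le_csSup Sset_bdd hu

lemma rDown_le (h2 : p.2 ≠ 0) (hne : (Sset m Dε p).Nonempty) {M : ℝ}
    (hub : ∀ u ∈ Sset m Dε p, u ≤ M) : rDown m Dε p ≤ M := by
  rw [rDown_of_ne h2]; exact csSup_le hne hub

lemma rDown_mono (hD : Dε ⊆ Dfull m n) (hqp : q ≤ p) (hr : Reach Dε p q)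
    (hp2 : p.2 ≠ 0) (hq : q ∈ gDown m Dε) : rDown m Dε q ≤ rDown m Dε p := by
  have hqD : q ∈ Dfull m n := hD (reach_memR hr)
  by_cases hq2 : q.2 = 0
  · rw [rDown_of_eq hq2]
    apply le_rDown hp2
    refine ⟨hqD.1, ?_⟩
    have : q = (q.1, (0:ℝ)) := Prod.ext rfl hq2
    exact this ▸ hr
  · have hq2pos : 0 < q.2 := lt_of_le_of_ne hqD.2.1 (Ne.symm hq2)
    rw [rDown_of_ne hq2, rDown_of_ne hp2]
    apply csSup_le_csSup Sset_bdd (Sset_nonempty hq)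
    intro u hu
    have hfst : u ≤ q.1 := reach_fst_le hu.2 hq2pos
    exact ⟨hu.1, reach_trans hr hu.2 ⟨hfst, le_of_lt hq2pos⟩ hqp⟩

/-- Closure of a monotone path is a monotone path, provided `Dε` is closed. -/
lemma closure_monpath (hDcl : IsClosed Dε) (h : IsMonPath Dε γ) :
    IsMonPath Dε (closure γ) := by
  refine ⟨closure_minimal h.1 hDcl, h.2.1.closure, ?_⟩
  have hsub : closure γ ×ˢ closure γ ⊆
      {w : (ℝ × ℝ) × (ℝ × ℝ) | (w.1.1 - w.2.1) * (w.1.2 - w.2.2) ≥ 0} := by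
    rw [← closure_prod_eq]
    apply closure_minimal
    · rintro ⟨a, b⟩ ⟨ha, hb⟩
      exact h.2.2 a ha b hb
    · apply isClosed_le continuous_const
      apply Continuous.mul
      · exact ((continuous_fst.comp continuous_fst).sub (continuous_fst.comp continuous_snd))
      · exact ((continuous_snd.comp continuous_fst).sub (continuous_snd.comp continuous_snd))
  intro a ha b hb
  exact hsub (Set.mk_mem_prod ha hb)

lemma compact_closure_of_subset_Dfull (h : γ ⊆ Dfull m n) : IsCompact (closure γ) := by
  apply Metric.isCompact_of_isClosed_isBounded isClosed_closure
  apply Bornology.IsBounded.closure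
  apply Bornology.IsBounded.subset _ h
  exact (Metric.isBounded_Icc _ _).prod (Metric.isBounded_Icc _ _)

/-- The key crossing argument: if `z1` (at height `H`, left of `q`) reaches `(u⋆,0)`,
and `q` (at height `H`) reaches some `(w,0)` with `w ≤ u⋆`, then `q` reaches `(u⋆,0)`. -/
lemma reach_through (hDcl : IsClosed Dε) (hD : Dε ⊆ Dfull m n) {H : ℝ} (hH : 0 < H)
    {q z1 : ℝ × ℝ} {w ustar : ℝ} (hq2 : q.2 = H) (hz12 : z1.2 = H) (hxx : z1.1 ≤ q.1)
    (h1 : Reach Dε z1 (ustar, (0:ℝ))) (h2 : Reach Dε q (w, (0:ℝ))) (hw : w ≤ ustar) :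
    Reach Dε q (ustar, (0:ℝ)) := by
  have hb1 : ((ustar, (0:ℝ)) : ℝ × ℝ) ≤ z1 := by
    constructor
    · exact reach_fst_le h1 (by rw [hz12]; exact hH)
    · show (0:ℝ) ≤ z1.2; rw [hz12]; exact le_of_lt hH
  have hb2 : ((w, (0:ℝ)) : ℝ × ℝ) ≤ q := by
    constructor
    · exact reach_fst_le h2 (by rw [hq2]; exact hH)
    · show (0:ℝ) ≤ q.2; rw [hq2]; exact le_of_lt hH
  rcases reach_trimmed h1 hb1 with ⟨γ, hγ, hz1γ, huγ, hbγ⟩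
  rcases reach_trimmed h2 hb2 with ⟨δ, hδ, hqδ, hwδ, hbδ⟩
  have hγ' := closure_monpath hDcl hγ
  have hδ' := closure_monpath hDcl hδ
  have hγc := compact_closure_of_subset_Dfull (γ := γ) (fun a ha => hD (hγ.1 ha))
  have hδc := compact_closure_of_subset_Dfull (γ := δ) (fun a ha => hD (hδ.1 ha))
  have hbγ' : ∀ a ∈ closure γ, ((ustar, (0:ℝ)) : ℝ × ℝ) ≤ a ∧ a ≤ z1 := by
    intro a ha
    have : closure γ ⊆ {a : ℝ × ℝ | (ustar, (0:ℝ)) ≤ a} ∩ {a : ℝ × ℝ | a ≤ z1} :=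
      closure_minimal (fun b hb => ⟨(hbγ b hb).1, (hbγ b hb).2⟩)
        ((isClosed_ge_point _).inter (isClosed_le_point _))
    exact this ha
  have hbδ' : ∀ a ∈ closure δ, ((w, (0:ℝ)) : ℝ × ℝ) ≤ a ∧ a ≤ q := by
    intro a ha
    have : closure δ ⊆ {a : ℝ × ℝ | (w, (0:ℝ)) ≤ a} ∩ {a : ℝ × ℝ | a ≤ q} :=
      closure_minimal (fun b hb => ⟨(hbδ b hb).1, (hbδ b hb).2⟩)
        ((isClosed_ge_point _).inter (isClosed_le_point _))
    exact this ha
  have hcross := cross_lemma hγ' hδ' hγc hδc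
    (subset_closure hz1γ) (subset_closure huγ) (subset_closure hqδ) (subset_closure hwδ)
    hbγ' hbδ' (by rw [hz12, hq2]) rfl hxx hw
  rcases hcross with ⟨zc, hzcγ, hzcδ⟩
  have hr1 : Reach Dε q zc := ⟨closure δ, hδ', subset_closure hqδ, hzcδ⟩
  have hr2 : Reach Dε zc (ustar, (0:ℝ)) := ⟨closure γ, hγ', hzcγ, subset_closure huγ⟩
  exact reach_trans hr1 hr2 (hbγ' zc hzcγ).1 (hbδ' zc hzcδ).2

/-- Exit lemma: a monotone path from `p` in cell `(i,j)` down to the bottom of `D`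
crosses the height `j-1`; and if that crossing is left of the cell, the path also
crosses the left edge of the cell. -/
lemma exitA {i j : ℕ} (hj1 : 1 ≤ j) {p : ℝ × ℝ} (hpc : p ∈ cellD i j) (hp2 : 0 < p.2)
    {w : ℝ} (hr : Reach Dε p (w, (0:ℝ))) :
    ∃ z1 : ℝ × ℝ, z1.2 = (j:ℝ)-1 ∧ ((w, (0:ℝ)) : ℝ × ℝ) ≤ z1 ∧ z1 ≤ p ∧
      Reach Dε p z1 ∧ Reach Dε z1 (w, (0:ℝ)) ∧
      (z1.1 < (i:ℝ)-1 → ∃ z : ℝ × ℝ, z.1 = (i:ℝ)-1 ∧ (j:ℝ)-1 ≤ z.2 ∧ z.2 ≤ (j:ℝ) ∧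
        ((w, (0:ℝ)) : ℝ × ℝ) ≤ z ∧ z ≤ p ∧ Reach Dε p z ∧ Reach Dε z (w, (0:ℝ))) := by
  have hj1' : (1:ℝ) ≤ (j:ℝ) := by exact_mod_cast hj1
  have hwp : ((w, (0:ℝ)) : ℝ × ℝ) ≤ p := ⟨reach_fst_le hr hp2, le_of_lt hp2⟩
  have hcmem : (j:ℝ)-1 ∈ Icc (((w, (0:ℝ)) : ℝ × ℝ).2) p.2 := by
    constructor
    · show (0:ℝ) ≤ (j:ℝ)-1; linarith
    · exact hpc.2.1
  rcases reach_between_snd hr hwp hcmem with ⟨z1, hpz1, hz1w, hwez1, hz1p, hz12⟩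
  refine ⟨z1, hz12, hwez1, hz1p, hpz1, hz1w, ?_⟩
  intro hlt
  have hcmem2 : (i:ℝ)-1 ∈ Icc z1.1 p.1 := ⟨le_of_lt hlt, hpc.1.1⟩
  rcases reach_between_fst hpz1 hz1p hcmem2 with ⟨z, hpz, hzz1, hz1lez, hzlep, hz1⟩
  refine ⟨z, hz1, ?_, ?_, ?_, hzlep, hpz, ?_⟩
  · rw [← hz12]; exact hz1lez.2
  · exact le_trans hzlep.2 hpc.2.2
  · constructor
    · exact le_trans hwez1.1 hz1lez.1
    · show (0:ℝ) ≤ z.2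
      have : (j:ℝ)-1 ≤ z.2 := by rw [← hz12]; exact hz1lez.2
      linarith
  · exact reach_trans hzz1 hz1w hwez1 hz1lez

end rdown
theorem stmt15
    (k m n : ℕ) (hk : 1 ≤ k) (hm : 1 ≤ m) (hn : 1 ≤ n)
    (x y : ℕ → EuclideanSpace ℝ (Fin k)) (hx : x m = x 0) (hy : y n = y 0)
    (ε : ℝ) (hε : 0 ≤ ε)
    (Dε : Set (ℝ × ℝ)) (hDε : Dε = Dfree m n x y ε)
    (i j : ℕ) (hi1 : 1 ≤ i) (hi2 : i ≤ 2*m) (hj1 : 1 ≤ j) (hj2 : j ≤ n)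
    (rstar : ℝ)
    (hL : (gDown m Dε ∩ cellL i j).Nonempty)
    (hconst : ∀ p ∈ gDown m Dε ∩ cellL i j, rDown m Dε p = rstar) :
    ((gDown m Dε ∩ cellB i j = ∅ →
        ∀ p ∈ gDown m Dε ∩ (cellT i j ∪ cellR i j), rDown m Dε p = rstar) ∧
      (∀ a b : ℝ, a ≤ b →
        gDown m Dε ∩ cellB i j = Icc a b ×ˢ {((j:ℝ)-1)} →
        ((∀ u : ℝ, (u, (j:ℝ)) ∈ gDown m Dε ∩ cellT i j →
            (u < a → rDown m Dε (u, (j:ℝ)) = rstar) ∧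
            (a ≤ u → u < b → rDown m Dε (u, (j:ℝ)) = rDown m Dε (u, (j:ℝ)-1)) ∧
            (b ≤ u → rDown m Dε (u, (j:ℝ)) = rDown m Dε (b, (j:ℝ)-1))) ∧
          (∀ v : ℝ, ((i:ℝ), v) ∈ gDown m Dε ∩ cellR i j →
            rDown m Dε ((i:ℝ), v) = rDown m Dε (b, (j:ℝ)-1))))) := by
  subst hDε
  set D := Dfree m n x y ε with hDdef
  have hD : D ⊆ Dfull m n := fun p hp => hp.1
  have hDcl : IsClosed D := isClosed_Dfree x m n y ε hx
  have hconv : Convex ℝ (D ∩ cellD i j) := convex_free_cell x y m n ε hx i j hi1 hi2 hj1 hj2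
  have hi1' : (1:ℝ) ≤ (i:ℝ) := by exact_mod_cast hi1
  have hj1' : (1:ℝ) ≤ (j:ℝ) := by exact_mod_cast hj1
  -- segments between comparable points of the free cell are monotone paths
  have segReach : ∀ p q : ℝ × ℝ, p ∈ D → p ∈ cellD i j →
      q ∈ D → q ∈ cellD i j → q ≤ p → Reach D p q := by
    intro p q hp hpc hq hqc hqp
    refine ⟨segment ℝ q p, ⟨?_, ?_, ?_⟩, right_mem_segment ℝ q p, left_mem_segment ℝ q p⟩
    · intro z hz
      exact (hconv.segment_subset ⟨hq, hqc⟩ ⟨hp, hpc⟩ hz).1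
    · exact (convex_segment q p).isConnected ⟨q, left_mem_segment ℝ q p⟩
    · intro z hz z' hz'
      rw [segment_eq_image] at hz hz'
      rcases hz with ⟨θ, hθ, rfl⟩
      rcases hz' with ⟨θ', hθ', rfl⟩
      simp only [Prod.fst_add, Prod.snd_add, Prod.smul_fst, Prod.smul_snd, smul_eq_mul]
      nlinarith [hqp.1, hqp.2, sq_nonneg (θ - θ'), mul_nonneg (mul_nonneg (sq_nonneg (θ - θ')) (sub_nonneg.2 hqp.1)) (sub_nonneg.2 hqp.2)]
  -- the left-edge engine
  have keyL : ∀ p : ℝ × ℝ, p ∈ gDown m D → p ∈ cellD i j → 0 < p.2 →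
      (∀ z1 : ℝ × ℝ, z1.2 = (j:ℝ)-1 → z1 ∈ gDown m D → z1 ≤ p → z1.1 < (i:ℝ)-1) →
      rDown m D p = rstar := by
    intro p hpg hpc hp2 hnoB
    have hp2' : p.2 ≠ 0 := ne_of_gt hp2
    have getL : ∀ w ∈ Sset m D p, ∃ z : ℝ × ℝ,
        z ∈ gDown m D ∧ z ∈ cellL i j ∧ z ≤ p ∧
          Reach D p z ∧ Reach D z (w, (0:ℝ)) ∧ w ≤ z.1 ∧ 0 < z.2 := by
      intro w hw
      rcases exitA hj1 hpc hp2 hw.2 with ⟨z1, hz12, hwz1, hz1p, hpz1, hz1w, hcond⟩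
      have hz1g : z1 ∈ gDown m D := mem_gDown_of_reach hz1w hw.1
      have hlt := hnoB z1 hz12 hz1g hz1p
      rcases hcond hlt with ⟨z, hzfst, hzsnd1, hzsnd2, hwz, hzp, hpz, hzw⟩
      have hzg : z ∈ gDown m D := mem_gDown_of_reach hzw hw.1
      have hz2pos : 0 < z.2 := by
        rcases lt_or_eq_of_le (le_trans (by linarith : (0:ℝ) ≤ (j:ℝ)-1) hzsnd1) with h | h
        · exact h
        · exfalso
          have hz2eq : z.2 = (j:ℝ)-1 := by linarith [hzsnd1]
          have := hnoB z hz2eq hzg hzp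
          rw [hzfst] at this
          exact lt_irrefl _ this
      exact ⟨z, hzg, Set.mem_prod.2 ⟨mem_singleton_iff.2 hzfst, ⟨hzsnd1, hzsnd2⟩⟩,
        hzp, hpz, hzw, hwz.1, hz2pos⟩
    apply le_antisymm
    · apply rDown_le hp2' (Sset_nonempty hpg)
      intro w hw
      rcases getL w hw with ⟨z, hzg, hzL, hzp, hpz, hzw, hwz, hz2⟩
      have h1 : w ≤ rDown m D z := le_rDown (ne_of_gt hz2) ⟨hw.1, hzw⟩
      rw [hconst z ⟨hzg, hzL⟩] at h1
      exact h1
    · rcases Sset_nonempty hpg with ⟨w, hw⟩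
      rcases getL w hw with ⟨z, hzg, hzL, hzp, hpz, hzw, hwz, hz2⟩
      have h1 : rDown m D z ≤ rDown m D p := rDown_mono hD hzp hpz hp2' hzg
      rw [hconst z ⟨hzg, hzL⟩] at h1
      exact h1
  constructor
  · -- part (a)
    intro hBempty p hp
    have hpg := hp.1
    have hpD : p ∈ D := hpg.1
    obtain ⟨hpc, hp2⟩ : p ∈ cellD i j ∧ 0 < p.2 := by
      rcases hp.2 with hT | hR
      · have hp2 : p.2 = (j:ℝ) := hT.2
        exact ⟨⟨hT.1, by rw [hp2]; exact ⟨by linarith, le_refl _⟩⟩, by rw [hp2]; linarith⟩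
      · have hp1 : p.1 = (i:ℝ) := hR.1
        refine ⟨⟨by rw [hp1]; exact ⟨by linarith, le_refl _⟩, hR.2⟩, ?_⟩
        rcases lt_or_eq_of_le ((hD hpD).2.1) with h | h
        · exact h
        · exfalso
          have hj0 : (j:ℝ)-1 = 0 := le_antisymm (by rw [h]; exact hR.2.1) (by linarith)
          have : p ∈ gDown m D ∩ cellB i j := by
            refine ⟨hpg, Set.mem_prod.2 ⟨?_, ?_⟩⟩
            · rw [hp1]; exact ⟨by linarith, le_refl _⟩
            · rw [mem_singleton_iff, ← h, hj0]
          rw [hBempty] at this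
          exact this
    apply keyL p hpg hpc hp2
    intro z1 hz12 hz1g hz1p
    by_contra hge
    push_neg at hge
    have : z1 ∈ gDown m D ∩ cellB i j :=
      ⟨hz1g, Set.mem_prod.2 ⟨⟨hge, le_trans hz1p.1 hpc.1.2⟩, mem_singleton_iff.2 hz12⟩⟩
    rw [hBempty] at this
    exact this
  · -- part (b)
    intro a b hab hB
    have haB : ((i:ℝ)-1) ≤ a ∧ a ≤ (i:ℝ) := by
      have : (a, (j:ℝ)-1) ∈ gDown m D ∩ cellB i j := by
        rw [hB]; exact Set.mk_mem_prod ⟨le_refl a, hab⟩ rfl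
      exact ⟨this.2.1.1, this.2.1.2⟩
    have hbB : ((i:ℝ)-1) ≤ b ∧ b ≤ (i:ℝ) := by
      have : (b, (j:ℝ)-1) ∈ gDown m D ∩ cellB i j := by
        rw [hB]; exact Set.mk_mem_prod ⟨hab, le_refl b⟩ rfl
      exact ⟨this.2.1.1, this.2.1.2⟩
    have keyB : ∀ c : ℝ, a ≤ c → c ≤ b → ∀ p : ℝ × ℝ,
        p ∈ gDown m D → p ∈ cellD i j → 0 < p.2 →
        ((c, (j:ℝ)-1) : ℝ × ℝ) ≤ p → (∀ t : ℝ, a ≤ t → t ≤ b → t ≤ p.1 → t ≤ c) →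
        rDown m D p = rDown m D (c, (j:ℝ)-1) := by
      intro c hac hcb p hpg hpc hp2 hcp hcap
      have hp2' : p.2 ≠ 0 := ne_of_gt hp2
      have hcB : (c, (j:ℝ)-1) ∈ gDown m D ∩ cellB i j := by
        rw [hB]; exact Set.mk_mem_prod ⟨hac, hcb⟩ rfl
      have hcg := hcB.1
      have hcD : ((c, (j:ℝ)-1) : ℝ × ℝ) ∈ D := hcg.1
      have hccell : ((c, (j:ℝ)-1) : ℝ × ℝ) ∈ cellD i j :=
        ⟨hcB.2.1, ⟨le_refl _, by simp only; linarith⟩⟩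
      apply le_antisymm
      · -- upper bound
        apply rDown_le hp2' (Sset_nonempty hpg)
        intro w hw
        rcases exitA hj1 hpc hp2 hw.2 with ⟨z1, hz12, hwz1, hz1p, hpz1, hz1w, hcond⟩
        have hz1g : z1 ∈ gDown m D := mem_gDown_of_reach hz1w hw.1
        have hz1le_c_of_ge : ((i:ℝ)-1) ≤ z1.1 → z1.1 ∈ Icc a b := by
          intro hge
          have : z1 ∈ gDown m D ∩ cellB i j :=
            ⟨hz1g, Set.mk_mem_prod ⟨hge, le_trans hz1p.1 hpc.1.2⟩ (mem_singleton_iff.2 hz12)⟩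
          rw [hB] at this
          exact this.1
        by_cases hjr : (j:ℝ)-1 = 0
        · -- j = 1 : rDown (c, j-1) = c
          rw [rDown_of_eq (p := ((c, (j:ℝ)-1) : ℝ × ℝ)) hjr]
          show w ≤ c
          rcases lt_or_ge z1.1 ((i:ℝ)-1) with hlt | hge
          · linarith [hwz1.1, haB.1]
          · have hzi := hz1le_c_of_ge hge
            have := hcap z1.1 hzi.1 hzi.2 hz1p.1
            linarith [hwz1.1]
        · have hjpos : 0 < (j:ℝ)-1 := lt_of_le_of_ne (by linarith) (Ne.symm hjr)
          rcases lt_or_ge z1.1 ((i:ℝ)-1) with hlt | hge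
          · -- crossing argument
            rcases Sset_nonempty hcg with ⟨w0, hw0⟩
            rcases le_or_gt w w0 with hww0 | hww0
            · exact le_trans hww0 (le_rDown hjr hw0)
            · have hRc : Reach D (c, (j:ℝ)-1) (w, (0:ℝ)) := by
                apply reach_through hDcl hD hjpos rfl hz12 (by linarith [haB.1]) hz1w hw0.2
                  (le_of_lt hww0)
              exact le_rDown hjr ⟨hw.1, hRc⟩
          · -- z1 is on the bottom edge of the cell
            have hzi := hz1le_c_of_ge hge
            have hz1c : z1.1 ≤ c := hcap z1.1 hzi.1 hzi.2 hz1p.1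
            have hz1cell : z1 ∈ cellD i j := by
              refine ⟨⟨hge, le_trans hz1p.1 hpc.1.2⟩, ?_⟩
              rw [hz12]; exact ⟨le_refl _, by linarith⟩
            have hRcz1 : Reach D (c, (j:ℝ)-1) z1 :=
              segReach (c, (j:ℝ)-1) z1 hcD hccell hz1g.1 hz1cell ⟨hz1c, le_of_eq hz12⟩
            have hRc : Reach D (c, (j:ℝ)-1) (w, (0:ℝ)) :=
              reach_trans hRcz1 hz1w hwz1 ⟨hz1c, le_of_eq hz12⟩
            exact le_rDown hjr ⟨hw.1, hRc⟩
      · -- lower bound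
        exact rDown_mono hD hcp (segReach p (c, (j:ℝ)-1) hpg.1 hpc hcD hccell hcp) hp2' hcg
    constructor
    · -- top edge
      intro u hu
      have hug := hu.1
      have hucell : u ∈ Icc ((i:ℝ)-1) (i:ℝ) := hu.2.1
      have hpc : ((u, (j:ℝ)) : ℝ × ℝ) ∈ cellD i j :=
        ⟨hucell, ⟨by simp only; linarith, le_refl _⟩⟩
      have hp2 : (0:ℝ) < ((u, (j:ℝ)) : ℝ × ℝ).2 := by simp only; linarith
      refine ⟨?_, ?_, ?_⟩
      · intro hua
        apply keyL (u, (j:ℝ)) hug hpc hp2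
        intro z1 hz12 hz1g hz1p
        by_contra hge
        push_neg at hge
        have : z1 ∈ gDown m D ∩ cellB i j :=
          ⟨hz1g, Set.mk_mem_prod ⟨hge, le_trans hz1p.1 hucell.2⟩ (mem_singleton_iff.2 hz12)⟩
        rw [hB] at this
        have := this.1.1
        have hz1u : z1.1 ≤ u := hz1p.1
        linarith
      · intro hau hub
        exact keyB u hau (le_of_lt hub) (u, (j:ℝ)) hug hpc hp2
          ⟨le_refl u, by simp only; linarith⟩ (fun t _ _ ht => ht)
      · intro hbu
        exact keyB b hab (le_refl b) (u, (j:ℝ)) hug hpc hp2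
          ⟨hbu, by simp only; linarith⟩ (fun t _ htb _ => htb)
    · -- right edge
      intro v hv
      have hvg := hv.1
      have hvIcc : v ∈ Icc ((j:ℝ)-1) (j:ℝ) := hv.2.2
      have hpc : (((i:ℝ), v) : ℝ × ℝ) ∈ cellD i j :=
        ⟨⟨by simp only; linarith, le_refl _⟩, hvIcc⟩
      by_cases hv0 : v = 0
      · -- degenerate corner case: v = 0 forces j = 1 and b = i
        subst hv0
        have hj0 : (j:ℝ)-1 = 0 := le_antisymm hvIcc.1 (by linarith)
        have hmemB : (((i:ℝ), (0:ℝ)) : ℝ × ℝ) ∈ gDown m D ∩ cellB i j := by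
          refine ⟨hvg, Set.mk_mem_prod ⟨by linarith, le_refl _⟩ ?_⟩
          rw [mem_singleton_iff, hj0]
        rw [hB] at hmemB
        have hbi : b = (i:ℝ) := le_antisymm hbB.2 hmemB.1.2
        rw [rDown_of_eq (p := (((i:ℝ), (0:ℝ)) : ℝ × ℝ)) rfl,
          rDown_of_eq (p := ((b, (j:ℝ)-1) : ℝ × ℝ)) hj0]
        exact hbi.symm
      · have hvpos : 0 < v := lt_of_le_of_ne (hD hvg.1).2.1 (Ne.symm hv0)
        exact keyB b hab (le_refl b) ((i:ℝ), v) hvg hpc hvpos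
          ⟨hbB.2, hvIcc.1⟩ (fun t _ htb _ => htb)
end
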